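/- If a semigroup S has rational word problem, then every finitely generated subsemigroup of S also has rational word problem. -/

import Mathlib

/-- The monoid homomorphism `(A ⊕ A)* → A* × A*` sending `inl a ↦ (a, ε)` and
`inr a ↦ (ε, a)`, used to define rational (asynchronous two-tape) relations. -/
def twoTapeHom (A : Type) : FreeMonoid (A ⊕ A) →* FreeMonoid A × FreeMonoid A :=
  FreeMonoid.lift (Sum.elim (fun a => (FreeMonoid.of a, 1)) (fun a => (1, FreeMonoid.of a)))

/-- A relation `R ⊆ A* × A*` is rational if it is the image of a regular language
over the alphabet `A ⊕ A` under `twoTapeHom`; equivalently, it is recognised by a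
two-tape asynchronous finite automaton. -/
def IsRationalRel {A : Type} (R : Set (FreeMonoid A × FreeMonoid A)) : Prop :=
  ∃ L : Language (A ⊕ A), L.IsRegular ∧
    twoTapeHom A '' {w : FreeMonoid (A ⊕ A) | w.toList ∈ L} = R

/-- The canonical embedding of the free semigroup `A⁺` into the free monoid `A*`. -/
def freeSemigroupToWord {A : Type} : FreeSemigroup A →ₙ* FreeMonoid A :=
  FreeSemigroup.lift FreeMonoid.of

/-- The two-tape word problem `ι(S,A)` of a semigroup `S` with respect to a
(generating) map `f : A → S`: all pairs of nonempty words over `A` whose images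
in `S` coincide, viewed as a relation on words in `A*`. -/
def wordProblem {A S : Type} [Semigroup S] (f : A → S) :
    Set (FreeMonoid A × FreeMonoid A) :=
  {p | ∃ w₁ w₂ : FreeSemigroup A,
        FreeSemigroup.lift f w₁ = FreeSemigroup.lift f w₂ ∧
        p = (freeSemigroupToWord w₁, freeSemigroupToWord w₂)}

/-- A semigroup has rational word problem if it is generated by some finite set `A`
(i.e. there is `f : A → S` with the induced homomorphism `A⁺ → S` surjective) for
which the two-tape word problem is a rational relation. -/
def HasRationalWordProblem (S : Type) [Semigroup S] : Prop :=
  ∃ (A : Type) (_ : Fintype A) (f : A → S),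
    Function.Surjective ⇑(FreeSemigroup.lift f) ∧ IsRationalRel (wordProblem f)

namespace RatWP
open Relation

variable {A B Q : Type}

/-- the left-tape projection of a two-tape word -/
def elL : List (A ⊕ A) → List A := fun z => z.filterMap Sum.getLeft?
/-- the right-tape projection of a two-tape word -/
def erL : List (A ⊕ A) → List A := fun z => z.filterMap Sum.getRight?

@[simp] lemma elL_nil : elL ([] : List (A ⊕ A)) = [] := rfl
@[simp] lemma erL_nil : erL ([] : List (A ⊕ A)) = [] := rfl
@[simp] lemma elL_cons_inl (a : A) (z : List (A ⊕ A)) :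
    elL (Sum.inl a :: z) = a :: elL z := by simp [elL, List.filterMap_cons]
@[simp] lemma elL_cons_inr (a : A) (z : List (A ⊕ A)) :
    elL (Sum.inr a :: z) = elL z := by simp [elL, List.filterMap_cons]
@[simp] lemma erL_cons_inl (a : A) (z : List (A ⊕ A)) :
    erL (Sum.inl a :: z) = erL z := by simp [erL, List.filterMap_cons]
@[simp] lemma erL_cons_inr (a : A) (z : List (A ⊕ A)) :
    erL (Sum.inr a :: z) = a :: erL z := by simp [erL, List.filterMap_cons]
@[simp] lemma elL_append (z₁ z₂ : List (A ⊕ A)) :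
    elL (z₁ ++ z₂) = elL z₁ ++ elL z₂ := by simp [elL]
@[simp] lemma erL_append (z₁ z₂ : List (A ⊕ A)) :
    erL (z₁ ++ z₂) = erL z₁ ++ erL z₂ := by simp [erL]

variable (δ : Q → A ⊕ A → Q) (acc : Set Q) (σL : B → List A)

/-- one buffer-consuming step of the simulating machine -/
inductive BFlush : Q × List A × List A → Q × List A × List A → Prop
  | left (q : Q) (a : A) (x y : List A) :
      BFlush (q, a :: x, y) (δ q (Sum.inl a), x, y)
  | right (q : Q) (a : A) (x y : List A) :
      BFlush (q, x, a :: y) (δ q (Sum.inr a), x, y)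

/-- acceptance of the simulating machine, with unbounded buffers -/
inductive NAcc : Q × List A × List A → List (B ⊕ B) → Prop
  | done (q : Q) : q ∈ acc → NAcc (q, [], []) []
  | flushL (q : Q) (a : A) (x y : List A) (z : List (B ⊕ B)) :
      NAcc (δ q (Sum.inl a), x, y) z → NAcc (q, a :: x, y) z
  | flushR (q : Q) (a : A) (x y : List A) (z : List (B ⊕ B)) :
      NAcc (δ q (Sum.inr a), x, y) z → NAcc (q, x, a :: y) z
  | readL (q : Q) (y : List A) (b : B) (z : List (B ⊕ B)) :
      NAcc (q, σL b, y) z → NAcc (q, [], y) (Sum.inl b :: z)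
  | readR (q : Q) (x : List A) (b : B) (z : List (B ⊕ B)) :
      NAcc (q, x, σL b) z → NAcc (q, x, []) (Sum.inr b :: z)

lemma bflush_length {s t : Q × List A × List A} (h : ReflTransGen (BFlush δ) s t) :
    t.2.1.length ≤ s.2.1.length ∧ t.2.2.length ≤ s.2.2.length := by
  induction h with
  | refl => exact ⟨le_rfl, le_rfl⟩
  | tail _ hbc ih =>
    rcases hbc with ⟨q, a, x, y⟩ | ⟨q, a, x, y⟩ <;>
      exact ⟨le_trans (by simp) ih.1, le_trans (by simp) ih.2⟩

lemma nacc_of_flushStar {s t : Q × List A × List A} (h : ReflTransGen (BFlush δ) s t)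
    {z : List (B ⊕ B)} (hz : NAcc δ acc σL t z) : NAcc δ acc σL s z := by
  induction h using ReflTransGen.head_induction_on with
  | refl => exact hz
  | head hab _ ih =>
    rcases hab with ⟨q, a, x, y⟩ | ⟨q, a, x, y⟩
    · exact NAcc.flushL _ _ _ _ _ ih
    · exact NAcc.flushR _ _ _ _ _ ih

lemma nacc_nil_iff (s : Q × List A × List A) :
    NAcc δ acc σL s ([] : List (B ⊕ B)) ↔
      ∃ qf ∈ acc, ReflTransGen (BFlush δ) s (qf, [], []) := by
  constructor
  · intro h
    generalize hz : ([] : List (B ⊕ B)) = z0 at *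
    induction h with
    | done q hq => exact ⟨q, hq, ReflTransGen.refl⟩
    | flushL q a x y z h ih =>
      obtain ⟨qf, hqf, hst⟩ := ih hz
      exact ⟨qf, hqf, ReflTransGen.head (BFlush.left _ _ _ _) hst⟩
    | flushR q a x y z h ih =>
      obtain ⟨qf, hqf, hst⟩ := ih hz
      exact ⟨qf, hqf, ReflTransGen.head (BFlush.right _ _ _ _) hst⟩
    | readL q y b z h ih => simp at hz
    | readR q x b z h ih => simp at hz
  · rintro ⟨qf, hqf, hst⟩
    exact nacc_of_flushStar δ acc σL hst (NAcc.done _ hqf)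

lemma nacc_consL_iff (s : Q × List A × List A) (b : B) (z : List (B ⊕ B)) :
    NAcc δ acc σL s (Sum.inl b :: z) ↔
      ∃ q' y', ReflTransGen (BFlush δ) s (q', [], y') ∧ NAcc δ acc σL (q', σL b, y') z := by
  constructor
  · intro h
    generalize hz : Sum.inl b :: z = z0 at h
    induction h with
    | done q hq => simp at hz
    | flushL q a x y z' h ih =>
      obtain ⟨q', y', hst, hn⟩ := ih hz
      exact ⟨q', y', ReflTransGen.head (BFlush.left _ _ _ _) hst, hn⟩
    | flushR q a x y z' h ih =>
      obtain ⟨q', y', hst, hn⟩ := ih hz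
      exact ⟨q', y', ReflTransGen.head (BFlush.right _ _ _ _) hst, hn⟩
    | readL q y b' z' h ih =>
      obtain ⟨hb, hz'⟩ : Sum.inl b = Sum.inl b' ∧ z = z' := by
        constructor <;> [exact (List.cons.injEq _ _ _ _ ▸ hz).1; exact (List.cons.injEq _ _ _ _ ▸ hz).2]
      cases Sum.inl.injEq b b' ▸ hb
      exact ⟨q, y, ReflTransGen.refl, hz' ▸ h⟩
    | readR q x b' z' h ih => simp at hz
  · rintro ⟨q', y', hst, hn⟩
    exact nacc_of_flushStar δ acc σL hst (NAcc.readL _ _ _ _ hn)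

lemma nacc_consR_iff (s : Q × List A × List A) (b : B) (z : List (B ⊕ B)) :
    NAcc δ acc σL s (Sum.inr b :: z) ↔
      ∃ q' x', ReflTransGen (BFlush δ) s (q', x', []) ∧ NAcc δ acc σL (q', x', σL b) z := by
  constructor
  · intro h
    generalize hz : Sum.inr b :: z = z0 at h
    induction h with
    | done q hq => simp at hz
    | flushL q a x y z' h ih =>
      obtain ⟨q', x', hst, hn⟩ := ih hz
      exact ⟨q', x', ReflTransGen.head (BFlush.left _ _ _ _) hst, hn⟩
    | flushR q a x y z' h ih =>
      obtain ⟨q', x', hst, hn⟩ := ih hz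
      exact ⟨q', x', ReflTransGen.head (BFlush.right _ _ _ _) hst, hn⟩
    | readL q y b' z' h ih => simp at hz
    | readR q x b' z' h ih =>
      obtain ⟨hb, hz'⟩ : Sum.inr b = Sum.inr b' ∧ z = z' := by
        constructor <;> [exact (List.cons.injEq _ _ _ _ ▸ hz).1; exact (List.cons.injEq _ _ _ _ ▸ hz).2]
      cases Sum.inr.injEq b b' ▸ hb
      exact ⟨q, x, ReflTransGen.refl, hz' ▸ h⟩
  · rintro ⟨q', x', hst, hn⟩
    exact nacc_of_flushStar δ acc σL hst (NAcc.readR _ _ _ _ hn)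


lemma nacc_sound {s : Q × List A × List A} {z : List (B ⊕ B)}
    (h : NAcc δ acc σL s z) :
    ∃ w : List (A ⊕ A), List.foldl δ s.1 w ∈ acc ∧
      elL w = s.2.1 ++ (elL z).flatMap σL ∧ erL w = s.2.2 ++ (erL z).flatMap σL := by
  induction h with
  | done q hq => exact ⟨[], hq, by simp, by simp⟩
  | flushL q a x y z h ih =>
    obtain ⟨w, hw, hel, her⟩ := ih
    exact ⟨Sum.inl a :: w, hw, by simp [hel], by simp [her]⟩
  | flushR q a x y z h ih =>
    obtain ⟨w, hw, hel, her⟩ := ih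
    exact ⟨Sum.inr a :: w, hw, by simp [hel], by simp [her]⟩
  | readL q y b z h ih =>
    obtain ⟨w, hw, hel, her⟩ := ih
    exact ⟨w, hw, by simp [hel], by simpa using her⟩
  | readR q x b z h ih =>
    obtain ⟨w, hw, hel, her⟩ := ih
    exact ⟨w, hw, by simpa using hel, by simp [her]⟩

lemma nacc_complete (hσ : ∀ b, σL b ≠ []) :
    ∀ (w : List (A ⊕ A)) (q : Q) (x y : List A) (u v : List B),
      elL w = x ++ u.flatMap σL → erL w = y ++ v.flatMap σL →
      List.foldl δ q w ∈ acc →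
      ∃ z : List (B ⊕ B), elL z = u ∧ erL z = v ∧ NAcc δ acc σL (q, x, y) z := by
  intro w
  induction w with
  | nil =>
    intro q x y u v hel her hacc
    simp only [elL_nil, erL_nil] at hel her
    obtain ⟨hx, hu⟩ := (List.append_eq_nil_iff).mp hel.symm
    obtain ⟨hy, hv⟩ := (List.append_eq_nil_iff).mp her.symm
    have hu' : u = [] := by
      cases u with
      | nil => rfl
      | cons b u => exact absurd (by simpa using hu : σL b = [] ∧ _).1 (hσ b)
    have hv' : v = [] := by
      cases v with
      | nil => rfl
      | cons b v => exact absurd (by simpa using hv : σL b = [] ∧ _).1 (hσ b)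
    subst hx; subst hy; subst hu'; subst hv'
    exact ⟨[], rfl, rfl, NAcc.done _ hacc⟩
  | cons c w ih =>
    intro q x y u v hel her hacc
    cases c with
    | inl a =>
      simp only [elL_cons_inl, erL_cons_inl] at hel her
      cases x with
      | cons a' x' =>
        obtain ⟨ha, hel'⟩ := List.cons.injEq _ _ _ _ ▸ hel
        subst ha
        obtain ⟨z, hz1, hz2, hz3⟩ := ih (δ q (Sum.inl a)) x' y u v hel' her hacc
        exact ⟨z, hz1, hz2, NAcc.flushL _ _ _ _ _ hz3⟩
      | nil =>
        simp only [List.nil_append] at hel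
        cases u with
        | nil => simp at hel
        | cons b u' =>
          rw [List.flatMap_cons] at hel
          cases hσb : σL b with
          | nil => exact absurd hσb (hσ b)
          | cons a₀ t =>
            rw [hσb, List.cons_append] at hel
            obtain ⟨ha, hel'⟩ := List.cons.injEq _ _ _ _ ▸ hel
            subst ha
            obtain ⟨z, hz1, hz2, hz3⟩ := ih (δ q (Sum.inl a)) t y u' v hel' her hacc
            refine ⟨Sum.inl b :: z, by simp [hz1], by simp [hz2], ?_⟩
            exact NAcc.readL _ _ _ _ (hσb ▸ NAcc.flushL _ _ _ _ _ hz3)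
    | inr a =>
      simp only [elL_cons_inr, erL_cons_inr] at hel her
      cases y with
      | cons a' y' =>
        obtain ⟨ha, her'⟩ := List.cons.injEq _ _ _ _ ▸ her
        subst ha
        obtain ⟨z, hz1, hz2, hz3⟩ := ih (δ q (Sum.inr a)) x y' u v hel her' hacc
        exact ⟨z, hz1, hz2, NAcc.flushR _ _ _ _ _ hz3⟩
      | nil =>
        simp only [List.nil_append] at her
        cases v with
        | nil => simp at her
        | cons b v' =>
          rw [List.flatMap_cons] at her
          cases hσb : σL b with
          | nil => exact absurd hσb (hσ b)
          | cons a₀ t =>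
            rw [hσb, List.cons_append] at her
            obtain ⟨ha, her'⟩ := List.cons.injEq _ _ _ _ ▸ her
            subst ha
            obtain ⟨z, hz1, hz2, hz3⟩ := ih (δ q (Sum.inr a)) x t u v' hel her' hacc
            refine ⟨Sum.inr b :: z, by simp [hz1], by simp [hz2], ?_⟩
            exact NAcc.readR _ _ _ _ (hσb ▸ NAcc.flushR _ _ _ _ _ hz3)


/-- bounded-buffer states -/
def BStates (A Q : Type) (K : ℕ) : Type :=
  Q × {l : List A // l.length ≤ K} × {l : List A // l.length ≤ K}

noncomputable instance instFintypeBoundedList (A : Type) [Fintype A] (K : ℕ) :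
    Fintype {l : List A // l.length ≤ K} :=
  (List.finite_length_le A K).fintype

noncomputable instance (A Q : Type) [Fintype A] [Fintype Q] (K : ℕ) : Fintype (BStates A Q K) := by
  unfold BStates; infer_instance

/-- forget the length bounds -/
def bval {K : ℕ} (s : BStates A Q K) : Q × List A × List A :=
  (s.1, s.2.1.1, s.2.2.1)

/-- the simulating NFA -/
def bNFA (q₀ : Q) (K : ℕ) : NFA (B ⊕ B) (BStates A Q K) where
  step s c :=
    Sum.elim
      (fun b => {s' | (s'.2.1 : List A) = σL b ∧
        ReflTransGen (BFlush δ) (bval s) (s'.1, [], (s'.2.2 : List A))})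
      (fun b => {s' | (s'.2.2 : List A) = σL b ∧
        ReflTransGen (BFlush δ) (bval s) (s'.1, (s'.2.1 : List A), [])})
      c
  start := {s | bval s = (q₀, [], [])}
  accept := {s | ∃ qf ∈ acc, ReflTransGen (BFlush δ) (bval s) (qf, [], [])}

lemma mem_evalFrom_iff {σ α : Type} (N : NFA α σ) :
    ∀ (z : List α) (S : Set σ) (s' : σ),
      s' ∈ N.evalFrom S z ↔ ∃ s ∈ S, s' ∈ N.evalFrom {s} z := by
  intro z
  induction z with
  | nil => intro S s'; simp [NFA.evalFrom]
  | cons c z ih =>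
    intro S s'
    have h1 : N.evalFrom S (c :: z) = N.evalFrom (N.stepSet S c) z := rfl
    rw [h1, ih]
    constructor
    · rintro ⟨s₁, hs₁, hev⟩
      rw [NFA.mem_stepSet] at hs₁
      obtain ⟨s, hs, hstep⟩ := hs₁
      refine ⟨s, hs, ?_⟩
      rw [show N.evalFrom {s} (c :: z) = N.evalFrom (N.stepSet {s} c) z from rfl, ih]
      exact ⟨s₁, by rw [NFA.mem_stepSet]; exact ⟨s, rfl, hstep⟩, hev⟩
    · rintro ⟨s, hs, hev⟩
      rw [show N.evalFrom {s} (c :: z) = N.evalFrom (N.stepSet {s} c) z from rfl, ih] at hev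
      obtain ⟨s₁, hs₁, hev⟩ := hev
      rw [NFA.mem_stepSet] at hs₁
      obtain ⟨s₀, hs₀, hstep⟩ := hs₁
      rcases hs₀ with rfl
      exact ⟨s₁, by rw [NFA.mem_stepSet]; exact ⟨s₀, hs, hstep⟩, hev⟩

lemma bNFA_key {q₀ : Q} {K : ℕ} (hK : ∀ b, (σL b).length ≤ K) :
    ∀ (z : List (B ⊕ B)) (s : BStates A Q K),
      (∃ s' ∈ (bNFA δ acc σL q₀ K).evalFrom {s} z, s' ∈ (bNFA δ acc σL q₀ K).accept) ↔
        NAcc δ acc σL (bval s) z := by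
  intro z
  induction z with
  | nil =>
    intro s
    have : (bNFA δ acc σL q₀ K).evalFrom {s} [] = {s} := rfl
    rw [this]
    simp only [Set.mem_singleton_iff, exists_eq_left]
    rw [nacc_nil_iff]
    rfl
  | cons c z ih =>
    intro s
    have h1 : (bNFA δ acc σL q₀ K).evalFrom {s} (c :: z)
        = (bNFA δ acc σL q₀ K).evalFrom ((bNFA δ acc σL q₀ K).stepSet {s} c) z := rfl
    constructor
    · rintro ⟨s', hs', hacc⟩
      rw [h1, mem_evalFrom_iff] at hs'
      obtain ⟨s₁, hs₁, hev⟩ := hs'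
      rw [NFA.mem_stepSet] at hs₁
      obtain ⟨s₀, hs₀, hstep⟩ := hs₁
      rcases hs₀ with rfl
      have hn : NAcc δ acc σL (bval s₁) z := (ih s₁).mp ⟨s', hev, hacc⟩
      cases c with
      | inl b =>
        obtain ⟨hbuf, hst⟩ := hstep
        rw [nacc_consL_iff]
        exact ⟨s₁.1, (s₁.2.2 : List A), hst, by
          have : bval s₁ = (s₁.1, σL b, (s₁.2.2 : List A)) := by
            simp [bval, hbuf]
          rwa [this] at hn⟩
      | inr b =>
        obtain ⟨hbuf, hst⟩ := hstep
        rw [nacc_consR_iff]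
        exact ⟨s₁.1, (s₁.2.1 : List A), hst, by
          have : bval s₁ = (s₁.1, (s₁.2.1 : List A), σL b) := by
            simp [bval, hbuf]
          rwa [this] at hn⟩
    · intro hn
      cases c with
      | inl b =>
        rw [nacc_consL_iff] at hn
        obtain ⟨q', y', hst, hn⟩ := hn
        have hy' : y'.length ≤ K := by
          have := (bflush_length δ hst).2
          exact le_trans this (le_trans s.2.2.2 le_rfl)
        set s₁ : BStates A Q K := (q', ⟨σL b, hK b⟩, ⟨y', hy'⟩) with hs₁def
        have hstep : s₁ ∈ (bNFA δ acc σL q₀ K).step s (Sum.inl b) := ⟨rfl, hst⟩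
        have : NAcc δ acc σL (bval s₁) z := hn
        obtain ⟨s', hev, hacc⟩ := (ih s₁).mpr this
        refine ⟨s', ?_, hacc⟩
        rw [h1, mem_evalFrom_iff]
        exact ⟨s₁, by rw [NFA.mem_stepSet]; exact ⟨s, rfl, hstep⟩, hev⟩
      | inr b =>
        rw [nacc_consR_iff] at hn
        obtain ⟨q', x', hst, hn⟩ := hn
        have hx' : x'.length ≤ K := by
          have := (bflush_length δ hst).1
          exact le_trans this (le_trans s.2.1.2 le_rfl)
        set s₁ : BStates A Q K := (q', ⟨x', hx'⟩, ⟨σL b, hK b⟩) with hs₁def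
        have hstep : s₁ ∈ (bNFA δ acc σL q₀ K).step s (Sum.inr b) := ⟨rfl, hst⟩
        have : NAcc δ acc σL (bval s₁) z := hn
        obtain ⟨s', hev, hacc⟩ := (ih s₁).mpr this
        refine ⟨s', ?_, hacc⟩
        rw [h1, mem_evalFrom_iff]
        exact ⟨s₁, by rw [NFA.mem_stepSet]; exact ⟨s, rfl, hstep⟩, hev⟩

lemma bNFA_accepts {q₀ : Q} {K : ℕ} (hK : ∀ b, (σL b).length ≤ K) (z : List (B ⊕ B)) :
    z ∈ (bNFA δ acc σL q₀ K).accepts ↔ NAcc δ acc σL (q₀, [], []) z := by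
  rw [NFA.mem_accepts]
  constructor
  · rintro ⟨s', hacc, hev⟩
    rw [mem_evalFrom_iff] at hev
    obtain ⟨s₀, hs₀, hev⟩ := hev
    have := (bNFA_key δ acc σL hK z s₀).mp ⟨s', hev, hacc⟩
    rwa [show bval s₀ = (q₀, [], []) from hs₀] at this
  · intro hn
    set s₀ : BStates A Q K := (q₀, ⟨[], by simp⟩, ⟨[], by simp⟩) with hdef
    have hb : bval s₀ = (q₀, [], []) := rfl
    obtain ⟨s', hev, hacc⟩ := (bNFA_key δ acc σL hK z s₀).mpr (by rwa [hb])
    exact ⟨s', hacc, (mem_evalFrom_iff _ _ _ _).mpr ⟨s₀, hb, hev⟩⟩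


lemma twoTapeHom_ofList (z : List (A ⊕ A)) :
    twoTapeHom A (FreeMonoid.ofList z) = (FreeMonoid.ofList (elL z), FreeMonoid.ofList (erL z)) := by
  induction z with
  | nil => simp [twoTapeHom]; rfl
  | cons c z ih =>
    have h : FreeMonoid.ofList (c :: z) = FreeMonoid.of c * FreeMonoid.ofList z := rfl
    rw [h, map_mul, ih]
    cases c with
    | inl a =>
      have : twoTapeHom A (FreeMonoid.of (Sum.inl a)) = (FreeMonoid.of a, 1) := rfl
      rw [this, elL_cons_inl, erL_cons_inl, Prod.mk_mul_mk, one_mul]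
      rfl
    | inr a =>
      have : twoTapeHom A (FreeMonoid.of (Sum.inr a)) = (1, FreeMonoid.of a) := rfl
      rw [this, elL_cons_inr, erL_cons_inr, Prod.mk_mul_mk, one_mul]
      rfl

variable {S : Type} [Semigroup S]

lemma lift_withOne (f : A → S) (w : FreeSemigroup A) :
    FreeMonoid.lift (fun a => ((f a : S) : WithOne S)) (freeSemigroupToWord w)
      = ((FreeSemigroup.lift f w : S) : WithOne S) := by
  induction w using FreeSemigroup.recOnMul with
  | ih1 a => simp [freeSemigroupToWord, FreeSemigroup.lift_of]
  | ih2 x y hx hy => rw [map_mul, map_mul, map_mul, hx, hy, WithOne.coe_mul]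

lemma toList_word_ne_nil (w : FreeSemigroup A) :
    FreeMonoid.toList (freeSemigroupToWord w) ≠ [] := by
  induction w using FreeSemigroup.recOnMul with
  | ih1 a => simp [freeSemigroupToWord, FreeSemigroup.lift_of]
  | ih2 x y hx hy => rw [map_mul, FreeMonoid.toList_mul]; simp [hx]

lemma exists_word : ∀ (l : List A), l ≠ [] →
    ∃ w : FreeSemigroup A, freeSemigroupToWord w = FreeMonoid.ofList l := by
  intro l
  induction l with
  | nil => intro h; exact absurd rfl h
  | cons a l ih =>
    intro _
    cases l with
    | nil =>
      refine ⟨FreeSemigroup.of a, ?_⟩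
      simp [freeSemigroupToWord, FreeSemigroup.lift_of]
    | cons a' l' =>
      obtain ⟨w, hw⟩ := ih (by simp)
      exact ⟨FreeSemigroup.of a * w, by rw [map_mul, hw]; rfl⟩

lemma wordProblem_iff (f : A → S) (p : FreeMonoid A × FreeMonoid A) :
    p ∈ wordProblem f ↔ p.1 ≠ 1 ∧ p.2 ≠ 1 ∧
      FreeMonoid.lift (fun a => ((f a : S) : WithOne S)) p.1
        = FreeMonoid.lift (fun a => ((f a : S) : WithOne S)) p.2 := by
  constructor
  · rintro ⟨w₁, w₂, he, hp⟩
    have h1 : p.1 = freeSemigroupToWord w₁ := by rw [hp]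
    have h2 : p.2 = freeSemigroupToWord w₂ := by rw [hp]
    refine ⟨?_, ?_, ?_⟩
    · rw [h1]; intro hc; exact toList_word_ne_nil w₁ (by rw [hc]; rfl)
    · rw [h2]; intro hc; exact toList_word_ne_nil w₂ (by rw [hc]; rfl)
    · rw [h1, h2, lift_withOne, lift_withOne, he]
  · rintro ⟨h1, h2, he⟩
    obtain ⟨w₁, hw₁⟩ := exists_word (FreeMonoid.toList p.1)
      (fun hc => h1 (by rw [← FreeMonoid.ofList_toList p.1, hc]; rfl))
    obtain ⟨w₂, hw₂⟩ := exists_word (FreeMonoid.toList p.2)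
      (fun hc => h2 (by rw [← FreeMonoid.ofList_toList p.2, hc]; rfl))
    rw [FreeMonoid.ofList_toList] at hw₁ hw₂
    refine ⟨w₁, w₂, ?_, ?_⟩
    · have := he
      rw [← hw₁, ← hw₂, lift_withOne, lift_withOne] at this
      exact WithOne.coe_inj.mp this
    · rw [hw₁, hw₂]
    
lemma withOneMap_injective {α β : Type} [Mul α] [Mul β] (f : α →ₙ* β)
    (hf : Function.Injective f) : Function.Injective (WithOne.mapMulHom f) := by
  intro x y h
  rcases eq_or_ne x 1 with rfl | hx
  · rcases eq_or_ne y 1 with rfl | hy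
    · rfl
    · obtain ⟨b, rfl⟩ := WithOne.ne_one_iff_exists.mp hy
      rw [map_one, WithOne.mapMulHom_coe] at h
      exact absurd h.symm WithOne.coe_ne_one
  · obtain ⟨a, rfl⟩ := WithOne.ne_one_iff_exists.mp hx
    rcases eq_or_ne y 1 with rfl | hy
    · rw [map_one, WithOne.mapMulHom_coe] at h
      exact absurd h WithOne.coe_ne_one
    · obtain ⟨b, rfl⟩ := WithOne.ne_one_iff_exists.mp hy
      rw [WithOne.mapMulHom_coe, WithOne.mapMulHom_coe, WithOne.coe_inj] at h
      rw [hf h]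


end RatWP

open RatWP in
/-- If a semigroup has rational word problem, then so does every finitely
generated subsemigroup of it. -/
theorem hasRationalWordProblem_of_fg_subsemigroup (S : Type) [Semigroup S]
    (h : HasRationalWordProblem S)
    (T : Subsemigroup S)
    (hfg : ∃ F : Finset S, Subsemigroup.closure (F : Set S) = T) :
    HasRationalWordProblem ↥T := by
  classical
  obtain ⟨A, instA, f, hsurj, L, hreg, hL⟩ := h
  obtain ⟨Q, instQ, M, hM⟩ := hreg
  obtain ⟨F, hF⟩ := hfg
  let B : Type := {x : S // x ∈ F}
  haveI : Fintype B := FinsetCoe.fintype F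
  let g : B → ↥T := fun b => ⟨(b : S), by rw [← hF]; exact Subsemigroup.subset_closure b.2⟩
  -- surjectivity of the induced homomorphism
  have hgsurj : Function.Surjective ⇑(FreeSemigroup.lift g) := by
    intro t
    have ht : (t : S) ∈ Subsemigroup.closure (F : Set S) := by rw [hF]; exact t.2
    have key : ∀ x, x ∈ Subsemigroup.closure (F : Set S) →
        ∃ w : FreeSemigroup B, ((FreeSemigroup.lift g w : ↥T) : S) = x := by
      intro x hx
      induction hx using Subsemigroup.closure_induction with
      | mem x hx => exact ⟨FreeSemigroup.of ⟨x, hx⟩, by simp [FreeSemigroup.lift_of, g]⟩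
      | mul x y hx hy ihx ihy =>
        obtain ⟨w₁, h₁⟩ := ihx
        obtain ⟨w₂, h₂⟩ := ihy
        exact ⟨w₁ * w₂, by rw [map_mul]; push_cast; rw [h₁, h₂]⟩
    obtain ⟨w, hw⟩ := key _ ht
    exact ⟨w, Subtype.ext hw⟩
  -- words over A representing the generators of T
  let wb : B → FreeSemigroup A := fun b => Function.surjInv hsurj (b : S)
  have hwb : ∀ b, FreeSemigroup.lift f (wb b) = (b : S) := fun b => Function.surjInv_eq hsurj _
  let σL : B → List A := fun b => FreeMonoid.toList (freeSemigroupToWord (wb b))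
  have hσ : ∀ b, σL b ≠ [] := fun b => toList_word_ne_nil (wb b)
  let K : ℕ := Finset.univ.sup fun b : B => (σL b).length
  have hK : ∀ b, (σL b).length ≤ K := fun b => Finset.le_sup (f := fun b : B => (σL b).length) (Finset.mem_univ b)
  let N := bNFA M.step M.accept σL M.start K
  refine ⟨B, inferInstance, g, hgsurj, N.accepts,
    ⟨Set (BStates A Q K), inferInstance, N.toDFA, N.toDFA_correct⟩, ?_⟩
  -- the substitution homomorphism and its properties
  have hσMto : ∀ l : List B,
      FreeMonoid.toList (FreeMonoid.lift (fun b => FreeMonoid.ofList (σL b)) (FreeMonoid.ofList l))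
        = l.flatMap σL := by
    intro l
    induction l with
    | nil => simp
    | cons b l ih =>
      have hc : FreeMonoid.ofList (b :: l) = FreeMonoid.of b * FreeMonoid.ofList l := rfl
      rw [hc, map_mul, FreeMonoid.toList_mul, ih, FreeMonoid.lift_eval_of,
        FreeMonoid.toList_ofList, List.flatMap_cons]
  have hσM_one : ∀ p : FreeMonoid B,
      FreeMonoid.lift (fun b => FreeMonoid.ofList (σL b)) p = 1 ↔ p = 1 := by
    intro p
    constructor
    · intro hp
      have h2 : (FreeMonoid.toList p).flatMap σL = [] := by
        rw [← hσMto (FreeMonoid.toList p), FreeMonoid.ofList_toList, hp]; rfl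
      have h3 : FreeMonoid.toList p = [] := by
        cases hq : FreeMonoid.toList p with
        | nil => rfl
        | cons b l =>
          rw [hq, List.flatMap_cons] at h2
          exact absurd (List.append_eq_nil_iff.mp h2).1 (hσ b)
      rw [← FreeMonoid.ofList_toList p, h3]; rfl
    · intro hp; rw [hp, map_one]
  -- relating `M` to the word problem of `S`
  have hMacc : ∀ u v : List A,
      (∃ w ∈ M.accepts, elL w = u ∧ erL w = v) ↔
        (FreeMonoid.ofList u, FreeMonoid.ofList v) ∈ wordProblem f := by
    intro u v
    rw [← hL]
    constructor
    · rintro ⟨w, hw, rfl, rfl⟩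
      refine ⟨FreeMonoid.ofList w, ?_, twoTapeHom_ofList w⟩
      show FreeMonoid.toList (FreeMonoid.ofList w) ∈ L
      rw [FreeMonoid.toList_ofList, ← hM]
      exact hw
    · rintro ⟨w, hwL, heq⟩
      have h2 := twoTapeHom_ofList (FreeMonoid.toList w)
      rw [FreeMonoid.ofList_toList] at h2
      rw [h2, Prod.mk.injEq] at heq
      refine ⟨FreeMonoid.toList w, by rw [hM]; exact hwL, ?_, ?_⟩
      · rw [← FreeMonoid.toList_ofList (elL (FreeMonoid.toList w)), heq.1, FreeMonoid.toList_ofList]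
      · rw [← FreeMonoid.toList_ofList (erL (FreeMonoid.toList w)), heq.2, FreeMonoid.toList_ofList]
  -- relating the NFA `N` to `M`
  have hNFAacc : ∀ u v : List B,
      (∃ z ∈ N.accepts, elL z = u ∧ erL z = v) ↔
        ∃ w ∈ M.accepts, elL w = u.flatMap σL ∧ erL w = v.flatMap σL := by
    intro u v
    constructor
    · rintro ⟨z, hz, rfl, rfl⟩
      have hn := (bNFA_accepts M.step M.accept σL hK z).mp hz
      obtain ⟨w, hw, hel, her⟩ := nacc_sound M.step M.accept σL hn
      exact ⟨w, hw, by simpa using hel, by simpa using her⟩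
    · rintro ⟨w, hw, hel, her⟩
      obtain ⟨z, hz1, hz2, hz3⟩ := nacc_complete M.step M.accept σL hσ w M.start [] [] u v
        (by simpa using hel) (by simpa using her) hw
      exact ⟨z, (bNFA_accepts M.step M.accept σL hK z).mpr hz3, hz1, hz2⟩
  -- homomorphism compatibilities
  have hcomp : ∀ p : FreeMonoid B,
      FreeMonoid.lift (fun a => ((f a : S) : WithOne S))
          (FreeMonoid.lift (fun b => FreeMonoid.ofList (σL b)) p)
        = FreeMonoid.lift (fun b : B => (((g b : ↥T) : S) : WithOne S)) p := by
    have hhom : (FreeMonoid.lift (fun a => ((f a : S) : WithOne S))).comp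
        (FreeMonoid.lift (fun b => FreeMonoid.ofList (σL b)))
        = FreeMonoid.lift (fun b : B => (((g b : ↥T) : S) : WithOne S)) := by
      apply FreeMonoid.hom_eq
      intro b
      show FreeMonoid.lift (fun a => ((f a : S) : WithOne S))
          (FreeMonoid.lift (fun b => FreeMonoid.ofList (σL b)) (FreeMonoid.of b)) = _
      rw [FreeMonoid.lift_eval_of, FreeMonoid.lift_eval_of]
      have h3 : FreeMonoid.ofList (σL b) = freeSemigroupToWord (wb b) :=
        FreeMonoid.ofList_toList _
      rw [h3, lift_withOne f (wb b), hwb b]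
    exact fun p => DFunLike.congr_fun hhom p
  have hj : ∀ x : FreeMonoid B,
      WithOne.mapMulHom (MulMemClass.subtype T) (FreeMonoid.lift (fun b => ((g b : ↥T) : WithOne ↥T)) x)
        = FreeMonoid.lift (fun b : B => (((g b : ↥T) : S) : WithOne S)) x := by
    have hhom : (WithOne.mapMulHom (MulMemClass.subtype T)).comp
        (FreeMonoid.lift (fun b => ((g b : ↥T) : WithOne ↥T)))
        = FreeMonoid.lift (fun b : B => (((g b : ↥T) : S) : WithOne S)) := by
      apply FreeMonoid.hom_eq
      intro b
      show WithOne.mapMulHom (MulMemClass.subtype T)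
          (FreeMonoid.lift (fun b => ((g b : ↥T) : WithOne ↥T)) (FreeMonoid.of b)) = _
      rw [FreeMonoid.lift_eval_of, FreeMonoid.lift_eval_of, WithOne.mapMulHom_coe]
      rfl
    exact fun x => DFunLike.congr_fun hhom x
  have hsub_inj : Function.Injective ⇑(MulMemClass.subtype T) := fun a b hab => Subtype.ext hab
  -- the final set equality
  ext p
  have himg : p ∈ twoTapeHom B '' {w | FreeMonoid.toList w ∈ N.accepts} ↔
      ∃ z : List (B ⊕ B), z ∈ N.accepts ∧
        elL z = FreeMonoid.toList p.1 ∧ erL z = FreeMonoid.toList p.2 := by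
    constructor
    · rintro ⟨w, hw, rfl⟩
      refine ⟨FreeMonoid.toList w, hw, ?_, ?_⟩
      · have h2 := twoTapeHom_ofList (FreeMonoid.toList w)
        rw [FreeMonoid.ofList_toList] at h2
        rw [h2, FreeMonoid.toList_ofList]
      · have h2 := twoTapeHom_ofList (FreeMonoid.toList w)
        rw [FreeMonoid.ofList_toList] at h2
        rw [h2, FreeMonoid.toList_ofList]
    · rintro ⟨z, hz, h1, h2⟩
      refine ⟨FreeMonoid.ofList z, by simpa [FreeMonoid.toList_ofList] using hz, ?_⟩
      rw [twoTapeHom_ofList, h1, h2, FreeMonoid.ofList_toList, FreeMonoid.ofList_toList]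

  show p ∈ twoTapeHom B '' {w | FreeMonoid.toList w ∈ N.accepts} ↔ p ∈ wordProblem g
  refine Iff.trans himg ?_
  rw [hNFAacc]
  rw [hMacc]
  have e1 : FreeMonoid.ofList ((FreeMonoid.toList p.1).flatMap σL)
      = FreeMonoid.lift (fun b => FreeMonoid.ofList (σL b)) p.1 := by
    rw [← hσMto (FreeMonoid.toList p.1), FreeMonoid.ofList_toList, FreeMonoid.ofList_toList]
  have e2 : FreeMonoid.ofList ((FreeMonoid.toList p.2).flatMap σL)
      = FreeMonoid.lift (fun b => FreeMonoid.ofList (σL b)) p.2 := by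
    rw [← hσMto (FreeMonoid.toList p.2), FreeMonoid.ofList_toList, FreeMonoid.ofList_toList]
  rw [e1, e2, wordProblem_iff f, wordProblem_iff g]
  simp only
  constructor
  · rintro ⟨h1, h2, he⟩
    refine ⟨fun hc => h1 (by rw [hc, map_one]), fun hc => h2 (by rw [hc, map_one]), ?_⟩
    apply withOneMap_injective (MulMemClass.subtype T) hsub_inj
    rw [hj, hj, ← hcomp, ← hcomp, he]
  · rintro ⟨h1, h2, he⟩
    refine ⟨fun hc => h1 ((hσM_one p.1).mp hc), fun hc => h2 ((hσM_one p.2).mp hc), ?_⟩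
    rw [hcomp, hcomp, ← hj, ← hj, he]
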